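/- There exists a unique pair (K, Λ) of symmetric positive-definite 2×2 real matrices, K = [[K11, K12],[K12, K22]] and Λ = [[Λ11, Λ12],[Λ12, Λ22]], such that (K11, K12, K22) solves the social planner's Riccati system and (Λ11, Λ12, Λ22) solves the system: (b²/γ)·Λ11² + (1/δ)·Λ12² + ρ·Λ11 − σ²K11 − λ = 0, (b²/γ)·Λ11·Λ12 + (1/δ)·Λ12·Λ22 + ρ·Λ12 − λ = 0, and (b²/γ)·Λ12² + (1/δ)·Λ22² + ρ·Λ22 − λ = 0. -/

import Mathlib

private lemma sqrt_root_pos (a cc k : ℝ) (ha : 0 < a) (hc : 0 < cc) (hk : 0 < k) :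
    0 < (-cc + Real.sqrt (cc ^ 2 + 4 * a * k)) / (2 * a) ∧
      a * ((-cc + Real.sqrt (cc ^ 2 + 4 * a * k)) / (2 * a)) ^ 2 +
        cc * ((-cc + Real.sqrt (cc ^ 2 + 4 * a * k)) / (2 * a)) = k := by
  have harg : (0:ℝ) ≤ cc ^ 2 + 4 * a * k := by positivity
  have hs2 : Real.sqrt (cc ^ 2 + 4 * a * k) ^ 2 = cc ^ 2 + 4 * a * k := Real.sq_sqrt harg
  have hsnn : 0 ≤ Real.sqrt (cc ^ 2 + 4 * a * k) := Real.sqrt_nonneg _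
  have hsc : cc < Real.sqrt (cc ^ 2 + 4 * a * k) := by nlinarith
  have ha' : a ≠ 0 := ne_of_gt ha
  refine ⟨div_pos (by linarith) (by positivity), ?_⟩
  field_simp
  rw [show a * 4 * k = 4 * a * k by ring]
  nlinarith [hs2]


private lemma sol_facts (A B ρ lam p x q : ℝ) (hA : 0 < A) (hB : 0 < B)
    (hρ : 0 < ρ) (hlam : 0 < lam) (hp : 0 < p) (hdet : 0 < p * q - x ^ 2)
    (e2 : A * p * x + B * x * q + ρ * x - lam = 0)
    (e3 : A * x ^ 2 + B * q ^ 2 + ρ * q - lam = 0) :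
    0 < x ∧ x < p ∧ x < q := by
  have hq : 0 < q := by nlinarith [sq_nonneg x]
  have hx : 0 < x := by nlinarith [mul_pos hA hp, mul_pos hB hq]
  have hiden : A * x * (p - x) = (B * q + ρ) * (q - x) := by linear_combination e2 - e3
  have hpx : x < p := by
    by_contra hle
    push_neg at hle
    have hqx' : q ≤ x := by nlinarith [mul_pos hA hx, mul_pos hB hq]
    nlinarith [mul_pos hx hq]
  have hqx : x < q := by
    by_contra hle
    push_neg at hle
    nlinarith [mul_pos hA hx, mul_pos hB hq]
  exact ⟨hx, hpx, hqx⟩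

private lemma key_nolt (A B ρ c lam μ p1 x1 q1 p2 x2 q2 : ℝ)
    (hA : 0 < A) (hB : 0 < B) (hρ : 0 < ρ) (hc : 0 < c)
    (hx1 : 0 < x1) (hp1 : x1 < p1) (hq1 : x1 < q1)
    (hx2 : 0 < x2) (hp2 : x2 < p2) (hq2 : x2 < q2)
    (e11 : A * p1 ^ 2 + B * x1 ^ 2 + c * p1 - μ = 0)
    (e21 : A * p1 * x1 + B * x1 * q1 + ρ * x1 - lam = 0)
    (e31 : A * x1 ^ 2 + B * q1 ^ 2 + ρ * q1 - lam = 0)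
    (e12 : A * p2 ^ 2 + B * x2 ^ 2 + c * p2 - μ = 0)
    (e22 : A * p2 * x2 + B * x2 * q2 + ρ * x2 - lam = 0)
    (e32 : A * x2 ^ 2 + B * q2 ^ 2 + ρ * q2 - lam = 0) :
    ¬ x1 < x2 := by
  intro hlt
  have hd : 0 < x2 - x1 := by linarith
  have hs : 0 < x1 + x2 := by linarith
  have hE1 : (p1 - p2) * (A * (p1 + p2) + c) = B * (x2 - x1) * (x1 + x2) := by
    linear_combination e11 - e12
  have hE2 : (q1 - q2) * (B * (q1 + q2) + ρ) = A * (x2 - x1) * (x1 + x2) := by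
    linear_combination e31 - e32
  have hE3 : A * x1 * (p1 - p2) + B * x1 * (q1 - q2) = (x2 - x1) * (ρ + A * p2 + B * q2) := by
    linear_combination e21 - e22
  have hFp : A * (x1 + x2) < A * (p1 + p2) + c := by nlinarith
  have hFq : B * (x1 + x2) < B * (q1 + q2) + ρ := by nlinarith
  have hFppos : 0 < A * (p1 + p2) + c := by nlinarith
  have hFqpos : 0 < B * (q1 + q2) + ρ := by nlinarith
  have hrhs1 : 0 < B * (x2 - x1) * (x1 + x2) := by positivity
  have hrhs2 : 0 < A * (x2 - x1) * (x1 + x2) := by positivity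
  have hdp : 0 < p1 - p2 := by
    rcases mul_pos_iff.mp (hE1 ▸ hrhs1) with ⟨h, _⟩ | ⟨_, h⟩
    · exact h
    · linarith
  have hdq : 0 < q1 - q2 := by
    rcases mul_pos_iff.mp (hE2 ▸ hrhs2) with ⟨h, _⟩ | ⟨_, h⟩
    · exact h
    · linarith
  have key1 : A * (p1 - p2) < B * (x2 - x1) := by
    have h := mul_lt_mul_of_pos_left hFp hdp
    rw [hE1] at h
    have h' : (A * (p1 - p2)) * (x1 + x2) < (B * (x2 - x1)) * (x1 + x2) := by
      calc (A * (p1 - p2)) * (x1 + x2) = (p1 - p2) * (A * (x1 + x2)) := by ring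
      _ < B * (x2 - x1) * (x1 + x2) := h
      _ = (B * (x2 - x1)) * (x1 + x2) := by ring
    exact lt_of_mul_lt_mul_right h' (le_of_lt hs)
  have key2 : B * (q1 - q2) < A * (x2 - x1) := by
    have h := mul_lt_mul_of_pos_left hFq hdq
    rw [hE2] at h
    have h' : (B * (q1 - q2)) * (x1 + x2) < (A * (x2 - x1)) * (x1 + x2) := by
      calc (B * (q1 - q2)) * (x1 + x2) = (q1 - q2) * (B * (x1 + x2)) := by ring
      _ < A * (x2 - x1) * (x1 + x2) := h
      _ = (A * (x2 - x1)) * (x1 + x2) := by ring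
    exact lt_of_mul_lt_mul_right h' (le_of_lt hs)
  -- from hE3: (x2-x1)*(ρ + A p2 + B q2) < x1*(A+B)*(x2-x1)
  have hfin : (x2 - x1) * (ρ + A * p2 + B * q2) < (x2 - x1) * ((A + B) * x1) := by
    calc (x2 - x1) * (ρ + A * p2 + B * q2) = A * x1 * (p1 - p2) + B * x1 * (q1 - q2) := hE3.symm
    _ < x1 * (B * (x2 - x1)) + x1 * (A * (x2 - x1)) := by
        have h1 := mul_lt_mul_of_pos_left key1 hx1
        have h2 := mul_lt_mul_of_pos_left key2 hx1
        linarith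
    _ = (x2 - x1) * ((A + B) * x1) := by ring
  have h2 : ρ + A * p2 + B * q2 < (A + B) * x1 := lt_of_mul_lt_mul_left hfin (le_of_lt hd)
  have h3 := mul_lt_mul_of_pos_left (show x1 < p2 by linarith) hA
  have h4 := mul_lt_mul_of_pos_left (show x1 < q2 by linarith) hB
  linarith

set_option maxHeartbeats 1000000 in
private lemma key (A B ρ c lam μ : ℝ) (hA : 0 < A) (hB : 0 < B) (hρ : 0 < ρ)
    (hc : 0 < c) (hcρ : c ≤ ρ) (hlam : 0 < lam) (hμ : lam < μ) :
    ∃! T : ℝ × ℝ × ℝ,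
      (0 < T.1 ∧ 0 < T.1 * T.2.2 - T.2.1 ^ 2) ∧
      A * T.1 ^ 2 + B * T.2.1 ^ 2 + c * T.1 - μ = 0 ∧
      A * T.1 * T.2.1 + B * T.2.1 * T.2.2 + ρ * T.2.1 - lam = 0 ∧
      A * T.2.1 ^ 2 + B * T.2.2 ^ 2 + ρ * T.2.2 - lam = 0 := by
  have hAB : 0 < A + B := by linarith
  obtain ⟨hy, hyeq⟩ := sqrt_root_pos (A + B) ρ lam hAB hρ hlam
  set y := (-ρ + Real.sqrt (ρ ^ 2 + 4 * (A + B) * lam)) / (2 * (A + B)) with hy_def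
  have hy2A : A * y ^ 2 < lam := by nlinarith
  have hy2B : B * y ^ 2 < lam := by nlinarith
  set h : ℝ → ℝ := fun t => t * (A * ((-c + Real.sqrt (c ^ 2 + 4 * A * (μ - B * t ^ 2))) / (2 * A))
      + B * ((-ρ + Real.sqrt (ρ ^ 2 + 4 * B * (lam - A * t ^ 2))) / (2 * B)) + ρ) - lam with hh
  have hcont : ContinuousOn h (Set.Icc 0 y) := by
    apply Continuous.continuousOn
    rw [hh]
    fun_prop
  have h0 : h 0 = -lam := by simp [hh]
  -- evaluate at y
  obtain ⟨hgy_pos, hgy_eq⟩ := sqrt_root_pos B ρ (lam - A * y ^ 2) hB hρ (by linarith)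
  have hgy : (-ρ + Real.sqrt (ρ ^ 2 + 4 * B * (lam - A * y ^ 2))) / (2 * B) = y := by
    set gy := (-ρ + Real.sqrt (ρ ^ 2 + 4 * B * (lam - A * y ^ 2))) / (2 * B) with hgy_def
    have hfact : (gy - y) * (B * (gy + y) + ρ) = 0 := by linear_combination hgy_eq - hyeq
    have hpos : 0 < B * (gy + y) + ρ := by nlinarith
    have := (mul_eq_zero.mp hfact).resolve_right (ne_of_gt hpos)
    linarith
  obtain ⟨hfy_pos, hfy_eq⟩ := sqrt_root_pos A c (μ - B * y ^ 2) hA hc (by linarith)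
  have hfygt : y < (-c + Real.sqrt (c ^ 2 + 4 * A * (μ - B * y ^ 2))) / (2 * A) := by
    set fy := (-c + Real.sqrt (c ^ 2 + 4 * A * (μ - B * y ^ 2))) / (2 * A) with hfy_def
    have hlt : A * y ^ 2 + c * y < μ - B * y ^ 2 := by nlinarith
    nlinarith [hfy_eq, hlt, mul_pos hA (add_pos hfy_pos hy)]
  have hhy_pos : 0 < h y := by
    rw [hh]
    simp only
    rw [hgy]
    set fy := (-c + Real.sqrt (c ^ 2 + 4 * A * (μ - B * y ^ 2))) / (2 * A) with hfy_def
    have hmul : 0 < A * y * (fy - y) := by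
      apply mul_pos (mul_pos hA hy); linarith
    nlinarith [hmul, hyeq]
  have hmem : (0 : ℝ) ∈ Set.Ioo (h 0) (h y) := by
    rw [h0]; exact ⟨by linarith, hhy_pos⟩
  obtain ⟨x, hxmem, hhx⟩ := intermediate_value_Ioo (le_of_lt hy) hcont hmem
  obtain ⟨hx0, hxy⟩ := hxmem
  clear hcont hmem h0 hhy_pos hgy hgy_pos hgy_eq hfy_pos hfy_eq hfygt
  rw [hh] at hhx
  simp only at hhx
  clear hh
  clear_value h
  clear h
  clear hy_def
  clear_value y
  have hx2 : x ^ 2 < y ^ 2 := by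
    apply pow_lt_pow_left₀ hxy hx0.le
    norm_num
  have hBx : B * x ^ 2 < μ := by
    have := mul_lt_mul_of_pos_left hx2 hB
    linarith
  have hAx : A * x ^ 2 < lam := by
    have := mul_lt_mul_of_pos_left hx2 hA
    linarith
  obtain ⟨hp_pos, hp_eq⟩ := sqrt_root_pos A c (μ - B * x ^ 2) hA hc (by linarith)
  obtain ⟨hq_pos, hq_eq⟩ := sqrt_root_pos B ρ (lam - A * x ^ 2) hB hρ (by linarith)
  set p := (-c + Real.sqrt (c ^ 2 + 4 * A * (μ - B * x ^ 2))) / (2 * A) with hp_def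
  set q := (-ρ + Real.sqrt (ρ ^ 2 + 4 * B * (lam - A * x ^ 2))) / (2 * B) with hq_def
  clear hp_def hq_def
  clear_value p q
  -- hhx : x * (A * p + B * q + ρ) - lam = 0
  have e1 : A * p ^ 2 + B * x ^ 2 + c * p - μ = 0 := by linarith [hp_eq]
  have e3 : A * x ^ 2 + B * q ^ 2 + ρ * q - lam = 0 := by linarith [hq_eq]
  have e2 : A * p * x + B * x * q + ρ * x - lam = 0 := by linear_combination hhx
  have t1 := mul_lt_mul_of_pos_left hx2 hA
  have t2 := mul_lt_mul_of_pos_left hx2 hB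
  have t3 : c * x ≤ ρ * x := mul_le_mul_of_nonneg_right hcρ hx0.le
  have t4 : ρ * x < ρ * y := mul_lt_mul_of_pos_left hxy hρ
  have hpx : x < p := by
    have hlt2 : A * x ^ 2 + c * x < μ - B * x ^ 2 := by linarith
    nlinarith [hp_eq, hlt2, mul_pos hA (add_pos hp_pos hx0)]
  have hqx : x < q := by
    have hlt2 : B * x ^ 2 + ρ * x < lam - A * x ^ 2 := by linarith
    nlinarith [hq_eq, hlt2, mul_pos hB (add_pos hq_pos hx0)]
  have hdet : 0 < p * q - x ^ 2 := by
    have t5 := mul_lt_mul_of_pos_left hqx (lt_trans hx0 hpx)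
    have t6 := mul_lt_mul_of_pos_right hpx hx0
    nlinarith [t5, t6]
  refine ⟨(p, x, q), ⟨⟨hp_pos, hdet⟩, e1, e2, e3⟩, ?_⟩
  rintro ⟨p', x', q'⟩ ⟨⟨hp', hdet'⟩, e1', e2', e3'⟩
  simp only at hp' hdet' e1' e2' e3' ⊢
  obtain ⟨hx', hpx', hqx'⟩ := sol_facts A B ρ lam p' x' q' hA hB hρ hlam hp' hdet' e2' e3'
  have h1 := key_nolt A B ρ c lam μ p' x' q' p x q hA hB hρ hc hx' hpx' hqx' hx0 hpx hqx
    e1' e2' e3' e1 e2 e3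
  have h2 := key_nolt A B ρ c lam μ p x q p' x' q' hA hB hρ hc hx0 hpx hqx hx' hpx' hqx'
    e1 e2 e3 e1' e2' e3'
  have hxx : x' = x := le_antisymm (not_lt.mp h2) (not_lt.mp h1)
  subst hxx
  have hfacp : (p' - p) * (A * (p' + p) + c) = 0 := by linear_combination e1' - e1
  have hposp : 0 < A * (p' + p) + c := by nlinarith
  have hpp : p' = p := by
    have := (mul_eq_zero.mp hfacp).resolve_right (ne_of_gt hposp)
    linarith
  have hfacq : (q' - q) * (B * (q' + q) + ρ) = 0 := by linear_combination e3' - e3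
  have hposq : 0 < B * (q' + q) + ρ := by nlinarith
  have hqq : q' = q := by
    have := (mul_eq_zero.mp hfacq).resolve_right (ne_of_gt hposq)
    linarith
  subst hpp; subst hqq
  rfl



/-- there exists a unique pair `(K, Λ)` of symmetric
positive-definite 2×2 matrices (encoded by their entries
`(K11, K12, K22)` and `(Λ11, Λ12, Λ22)`, positive-definiteness meaning
`K11 > 0` and `K11·K22 − K12² > 0`) solving the social planner's Riccati
system and the associated system for `Λ`. -/
theorem stmt_9 (ρ σ b γ δ lam η : ℝ) (hρ : 0 < ρ) (hσ : 0 < σ) (hb : 0 < b)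
    (hγ : 0 < γ) (hδ : 0 < δ) (hlam : 0 < lam) (hη : 0 < η) (hρσ : σ ^ 2 < ρ) :
    ∃! P : (ℝ × ℝ × ℝ) × (ℝ × ℝ × ℝ),
      (fun (K11 K12 K22 L11 L12 L22 : ℝ) =>
        -- K is symmetric positive-definite
        (0 < K11 ∧ 0 < K11 * K22 - K12 ^ 2) ∧
        -- Λ is symmetric positive-definite
        (0 < L11 ∧ 0 < L11 * L22 - L12 ^ 2) ∧
        -- K solves the social planner's Riccati system
        (b ^ 2 / γ) * K11 ^ 2 + (1 / δ) * K12 ^ 2 + (ρ - σ ^ 2) * K11 - lam - η = 0 ∧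
        (b ^ 2 / γ) * K11 * K12 + (1 / δ) * K12 * K22 + ρ * K12 - lam = 0 ∧
        (b ^ 2 / γ) * K12 ^ 2 + (1 / δ) * K22 ^ 2 + ρ * K22 - lam = 0 ∧
        -- Λ solves its Riccati system
        (b ^ 2 / γ) * L11 ^ 2 + (1 / δ) * L12 ^ 2 + ρ * L11 - σ ^ 2 * K11 - lam = 0 ∧
        (b ^ 2 / γ) * L11 * L12 + (1 / δ) * L12 * L22 + ρ * L12 - lam = 0 ∧
        (b ^ 2 / γ) * L12 ^ 2 + (1 / δ) * L22 ^ 2 + ρ * L22 - lam = 0)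
      P.1.1 P.1.2.1 P.1.2.2 P.2.1 P.2.2.1 P.2.2.2 := by
  have hA : (0:ℝ) < b ^ 2 / γ := by positivity
  have hB : (0:ℝ) < 1 / δ := by positivity
  have hcK : 0 < ρ - σ ^ 2 := by linarith
  have hcρK : ρ - σ ^ 2 ≤ ρ := by nlinarith [sq_nonneg σ]
  obtain ⟨⟨k11, k12, k22⟩, hK, hKu⟩ :=
    key (b ^ 2 / γ) (1 / δ) ρ (ρ - σ ^ 2) lam (lam + η) hA hB hρ hcK hcρK hlam (by linarith)
  obtain ⟨⟨hK1, hKdet⟩, k1, k2, k3⟩ := hK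
  have hμL : lam < lam + σ ^ 2 * k11 := by nlinarith [mul_pos (mul_pos hσ hσ) hK1]
  obtain ⟨⟨l11, l12, l22⟩, hL, hLu⟩ :=
    key (b ^ 2 / γ) (1 / δ) ρ ρ lam (lam + σ ^ 2 * k11) hA hB hρ hρ le_rfl hlam hμL
  obtain ⟨⟨hL1, hLdet⟩, l1, l2, l3⟩ := hL
  simp only at hK1 hKdet k1 k2 k3 hL1 hLdet l1 l2 l3
  refine ⟨((k11, k12, k22), (l11, l12, l22)),
    ⟨⟨hK1, hKdet⟩, ⟨hL1, hLdet⟩, by linear_combination k1, by linear_combination k2,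
      by linear_combination k3, by linear_combination l1, by linear_combination l2,
      by linear_combination l3⟩, ?_⟩
  rintro ⟨⟨a11, a12, a22⟩, ⟨c11, c12, c22⟩⟩ hP
  obtain ⟨hPD1, hPD2, q1, q2, q3, r1, r2, r3⟩ := hP
  simp only at hPD1 hPD2 q1 q2 q3 r1 r2 r3
  have hKK : (a11, a12, a22) = ((k11, k12, k22) : ℝ × ℝ × ℝ) :=
    hKu (a11, a12, a22) ⟨hPD1, by linear_combination q1, by linear_combination q2,
      by linear_combination q3⟩
  simp only [Prod.mk.injEq] at hKK
  obtain ⟨ha11, ha12, ha22⟩ := hKK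
  subst ha11; subst ha12; subst ha22
  have hLL : (c11, c12, c22) = ((l11, l12, l22) : ℝ × ℝ × ℝ) :=
    hLu (c11, c12, c22) ⟨hPD2, by linear_combination r1, by linear_combination r2,
      by linear_combination r3⟩
  simp only [Prod.mk.injEq] at hLL
  obtain ⟨hc11, hc12, hc22⟩ := hLL
  subst hc11; subst hc12; subst hc22
  rfl
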